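/- arXiv:1611.01621 — 2 statements merged into one kernel-verified Lean document; each statement's English description precedes it below -/
import Mathlib

section
/- (Galois descent) Let E/F be a finite Galois extension with group G, and let W be a finite-dimensional E-vector space with a semilinear G-action, i.e., an F-linear action π of G on W with π(g)(e·w) = g(e)·π(g)(w) for g ∈ G, e ∈ E, w ∈ W. Then the F-subspace W₀ = W^G of G-fixed vectors satisfies W₀ ⊗_F E ≅ W via the multiplication map w₀ ⊗ e ↦ e·w₀. -/
set_option linter.unusedSectionVars false

open TensorProduct


/-- The `F`-subspace of vectors fixed by a semilinear Galois action. -/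
def galoisFixed {F E W : Type*} [Field F] [Field E] [Algebra F E]
    [AddCommGroup W] [Module F W]
    (π : (E ≃ₐ[F] E) →* (W →ₗ[F] W)) : Submodule F W where
  carrier := {w | ∀ g, π g w = w}
  add_mem' := by
    intro a b ha hb g
    rw [map_add, ha g, hb g]
  zero_mem' := fun g => map_zero _
  smul_mem' := by
    intro c w hw g
    rw [map_smul, hw g]

section Aux

variable {F E W : Type*} [Field F] [Field E] [Algebra F E]
    [FiniteDimensional F E] [IsGalois F E]
    [AddCommGroup W] [Module F W] [Module E W] [IsScalarTower F E W]
    (π : (E ≃ₐ[F] E) →* (W →ₗ[F] W))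
    (hsemi : ∀ (g : E ≃ₐ[F] E) (e : E) (w : W), π g (e • w) = g e • π g w)

/-- Dedekind independence of characters for the Galois group. -/
lemma gd_dedekind (c : (E ≃ₐ[F] E) → E)
    (h : ∀ e : E, ∑ g : E ≃ₐ[F] E, c g * g e = 0) : ∀ g, c g = 0 := by
  have hli : LinearIndependent E
      (fun g : E ≃ₐ[F] E => ((g : E →* E) : E → E)) := by
    refine (linearIndependent_monoidHom E E).comp
      (fun g : E ≃ₐ[F] E => (g : E →* E)) ?_
    intro g₁ g₂ hgg
    ext x
    exact DFunLike.congr_fun hgg x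
  have := Fintype.linearIndependent_iff.1 hli c ?_
  · exact this
  · funext e
    simpa using h e

include hsemi in
/-- The "trace" of any vector lies in the fixed submodule. -/
lemma gd_sum_mem (w : W) : (∑ g : E ≃ₐ[F] E, π g w) ∈ galoisFixed π := by
  intro h
  rw [map_sum]
  refine Fintype.sum_equiv (Equiv.mulLeft h) _ _ (fun g => ?_)
  rw [← Module.End.mul_apply, ← map_mul]
  rfl

include hsemi in
/-- Fixed vectors that are `F`-linearly independent are `E`-linearly independent in `W`. -/
lemma gd_li {ι : Type*} (v : ι → galoisFixed π) (hv : LinearIndependent F v) :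
    LinearIndependent E (fun i => (v i : W)) := by
  have hvW : LinearIndependent F (fun i => (v i : W)) :=
    hv.map' (galoisFixed π).subtype (Submodule.ker_subtype _)
  rw [linearIndependent_iff'] at hvW ⊢
  intro s c hsum i hi
  have key : ∀ x : E, ∑ j ∈ s, (Algebra.trace F E (x * c j)) • (v j : W) = 0 := by
    intro x
    have h0 : ∑ g : E ≃ₐ[F] E, π g (x • ∑ j ∈ s, c j • (v j : W)) = 0 := by
      rw [hsum, smul_zero]
      simp
    calc ∑ j ∈ s, (Algebra.trace F E (x * c j)) • (v j : W)
        = ∑ j ∈ s, (algebraMap F E (Algebra.trace F E (x * c j))) • (v j : W) := by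
          simp_rw [algebraMap_smul]
      _ = ∑ j ∈ s, (∑ g : E ≃ₐ[F] E, g (x * c j)) • (v j : W) := by
          simp_rw [trace_eq_sum_automorphisms]
      _ = ∑ g : E ≃ₐ[F] E, ∑ j ∈ s, g (x * c j) • (v j : W) := by
          rw [Finset.sum_comm]
          simp_rw [Finset.sum_smul]
      _ = ∑ g : E ≃ₐ[F] E, π g (x • ∑ j ∈ s, c j • (v j : W)) := by
          refine Finset.sum_congr rfl (fun g _ => ?_)
          rw [Finset.smul_sum, map_sum]
          refine Finset.sum_congr rfl (fun j hj => ?_)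
          rw [smul_smul, hsemi, (v j).2 g]
      _ = 0 := h0
  have htr : ∀ x : E, Algebra.trace F E (c i * x) = 0 := by
    intro x
    rw [mul_comm]
    exact hvW s _ (key x) i hi
  have hnd := traceForm_nondegenerate F E
  exact hnd.1 (c i) (fun x => by simpa [Algebra.traceForm_apply] using htr x)

include hsemi in
/-- The fixed vectors span `W` over `E`. -/
lemma gd_span : Submodule.span E ((galoisFixed π : Set W)) = ⊤ := by
  by_contra hne
  have hex : ¬ ∀ x : W, x ∈ Submodule.span E ((galoisFixed π : Set W)) :=
    fun h => hne (Submodule.eq_top_iff'.2 h)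
  push_neg at hex
  obtain ⟨w, hw⟩ := hex
  obtain ⟨φ, hφw, hφ⟩ := Submodule.exists_dual_map_eq_bot_of_notMem hw inferInstance
  have hvan : ∀ x ∈ Submodule.span E ((galoisFixed π : Set W)), φ x = 0 := by
    intro x hx
    have : φ x ∈ Submodule.map φ (Submodule.span E ((galoisFixed π : Set W))) :=
      Submodule.mem_map_of_mem hx
    rwa [hφ, Submodule.mem_bot] at this
  have key : ∀ e : E, ∑ g : E ≃ₐ[F] E, φ (π g w) * g e = 0 := by
    intro e
    have hmem : (∑ g : E ≃ₐ[F] E, π g (e • w)) ∈ galoisFixed π := gd_sum_mem π hsemi _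
    have h0 : φ (∑ g : E ≃ₐ[F] E, π g (e • w)) = 0 :=
      hvan _ (Submodule.subset_span hmem)
    rw [map_sum] at h0
    rw [← h0]
    refine Finset.sum_congr rfl (fun g _ => ?_)
    rw [hsemi, map_smul, smul_eq_mul, mul_comm]
  have := gd_dedekind (fun g => φ (π g w)) (fun e => key e) 1
  simp only [map_one, Module.End.one_apply] at this
  exact hφw this

end Aux

/-- Galois descent: Let `E/F` be a finite Galois extension with group
`G = Gal(E/F)`, and `W` a finite-dimensional `E`-vector space with a semilinear `G`-action
`π`, i.e. `π(g)(e • w) = g(e) • π(g)(w)`.  Then the `F`-subspace `W₀ = W^G` of fixed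
vectors satisfies `W₀ ⊗_F E ≅ W` via the multiplication map `w₀ ⊗ e ↦ e • w₀`. -/
theorem stmt8 {F E W : Type*} [Field F] [Field E] [Algebra F E]
    [FiniteDimensional F E] [IsGalois F E]
    [AddCommGroup W] [Module F W] [Module E W] [IsScalarTower F E W]
    [FiniteDimensional E W]
    (π : (E ≃ₐ[F] E) →* (W →ₗ[F] W))
    (hsemi : ∀ (g : E ≃ₐ[F] E) (e : E) (w : W), π g (e • w) = g e • π g w) :
    IsBaseChange E (galoisFixed π).subtype := by
  classical
  have hFW : FiniteDimensional F W := Module.Finite.trans E W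
  delta IsBaseChange IsTensorProduct
  set f := (galoisFixed π).subtype with hf
  have heq : TensorProduct.lift
        (((Algebra.linearMap E <| Module.End E ((galoisFixed π) →ₗ[F] W)).flip f).restrictScalars F)
      = (f.liftBaseChange E).restrictScalars F := by
    apply TensorProduct.ext'
    intro e w
    simp
  rw [heq]
  let B := Module.Free.chooseBasis F (galoisFixed π)
  let b1 := B.baseChange E
  have hli := gd_li π hsemi B B.linearIndependent
  have hsp : ⊤ ≤ Submodule.span E (Set.range fun i => (B i : W)) := by
    rw [← gd_span π hsemi]
    apply Submodule.span_le.2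
    intro x hx
    obtain ⟨y, rfl⟩ : ∃ y : galoisFixed π, (y : W) = x := ⟨⟨x, hx⟩, rfl⟩
    have hy : (y : W) ∈ Submodule.map (galoisFixed π).subtype (Submodule.span F (Set.range B)) := by
      rw [B.span_eq]; exact ⟨y, trivial, rfl⟩
    rw [Submodule.map_span] at hy
    have hmem := Submodule.span_le_restrictScalars F E
      ((galoisFixed π).subtype '' Set.range B) hy
    rw [Submodule.restrictScalars_mem] at hmem
    refine Submodule.span_mono ?_ hmem
    rintro _ ⟨_, ⟨i, rfl⟩, rfl⟩
    exact ⟨i, rfl⟩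
  let b2 := Module.Basis.mk hli hsp
  have hmap : f.liftBaseChange E = (b1.equiv b2 (Equiv.refl _)).toLinearMap := by
    apply b1.ext
    intro i
    simp only [LinearEquiv.coe_coe]
    rw [show b1 i = (B.baseChange E) i from rfl, Module.Basis.baseChange_apply,
      LinearMap.liftBaseChange_tmul, one_smul, ← Module.Basis.baseChange_apply,
      Module.Basis.equiv_apply, Equiv.refl_apply, Module.Basis.mk_apply]
    rfl
  have : Function.Bijective (f.liftBaseChange E) := by
    rw [hmap]; exact (b1.equiv b2 (Equiv.refl _)).bijective
  exact this
end

section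
/- Let N be a locally compact totally disconnected abelian group acting smoothly on the Schwartz space S(X) of a locally compact totally disconnected space X by (n·f)(x) = ψ_x(n) f(x), where x ↦ ψ_x is a continuous map from X to the character group of N. If ψ is a character of N that is not equal to ψ_x for any x ∈ X, then the twisted Jacquet module S(X)_ψ = S(X)/span{n·f − ψ(n) f : n ∈ N, f ∈ S(X)} is zero. (Key algebraic step: for X' compact open, the ideal of S(X') generated by the functions x ↦ (1 − ψ_x(n)⁻¹ψ(n)) f(x) is all of S(X') unless some ψ_{x₀} = ψ.) -/
/-- The Schwartz space `S(X)` of a totally disconnected space: locally constant,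
compactly supported `ℂ`-valued functions, as a submodule of `LocallyConstant X ℂ`. -/
noncomputable def SchwartzTD (X : Type*) [TopologicalSpace X] : Submodule ℂ (LocallyConstant X ℂ) where
  carrier := {f | HasCompactSupport (f : X → ℂ)}
  add_mem' := by
    intro f g hf hg
    simpa using hf.add hg
  zero_mem' := by
    simp [HasCompactSupport, tsupport] 
  smul_mem' := by
    intro c f hf
    first
      | exact hf.smul_left (f := fun _ => c)
      | simpa [Pi.smul_def] using hf.smul_left (f := fun _ => c)
/-- Multiplication of a Schwartz function by an arbitrary locally constant function. -/
noncomputable def mulS {X : Type*} [TopologicalSpace X] (h : LocallyConstant X ℂ)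
    (f : SchwartzTD X) : SchwartzTD X :=
  ⟨h * f.1, by
    have : f.1 ∈ SchwartzTD X := f.2
    exact HasCompactSupport.mul_left this⟩

@[simp] lemma mulS_apply {X : Type*} [TopologicalSpace X] (h : LocallyConstant X ℂ)
    (f : SchwartzTD X) (y : X) :
    ((mulS h f : SchwartzTD X) : LocallyConstant X ℂ) y = h y * (f : LocallyConstant X ℂ) y := rfl

lemma sub_smul_applyS {X : Type*} [TopologicalSpace X] (a b : SchwartzTD X) (c : ℂ) (y : X) :
    ((a - c • b : SchwartzTD X) : LocallyConstant X ℂ) y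
      = (a : LocallyConstant X ℂ) y - c * (b : LocallyConstant X ℂ) y := rfl

lemma sub_applyS {X : Type*} [TopologicalSpace X] (a b : SchwartzTD X) (y : X) :
    ((a - b : SchwartzTD X) : LocallyConstant X ℂ) y
      = (a : LocallyConstant X ℂ) y - (b : LocallyConstant X ℂ) y := rfl

/-- Let `N` be a locally compact totally disconnected abelian group acting
smoothly on `S(X)` by `(n·f)(x) = ψ_x(n) f(x)`, where `x ↦ ψ_x` is a continuous family of
characters of `N`.  If `ψ` is a character of `N` with `ψ ≠ ψ_x` for every `x ∈ X`, then the
twisted Jacquet module `S(X)_ψ` is zero, i.e. the span of `{n·f − ψ(n)f}` is all of `S(X)`. -/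
theorem stmt14 {X : Type*} [TopologicalSpace X] [T2Space X] [LocallyCompactSpace X]
    [TotallyDisconnectedSpace X]
    {N : Type*} [CommGroup N] [TopologicalSpace N] [IsTopologicalGroup N]
    [LocallyCompactSpace N] [TotallyDisconnectedSpace N]
    (Ψ : X → N → ℂ) (ψ : N → ℂ)
    (hΨchar : ∀ x, ∀ n m, Ψ x (n * m) = Ψ x n * Ψ x m)
    (hΨcont : ∀ x, Continuous (Ψ x))
    (hcont : ∀ n, Continuous fun x => Ψ x n)
    (hψchar : ∀ n m, ψ (n * m) = ψ n * ψ m)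
    (hψcont : Continuous ψ)
    (ρ : N →* Module.End ℂ (SchwartzTD X))
    (hρ : ∀ (n : N) (f : SchwartzTD X) (x : X),
      ((ρ n f : LocallyConstant X ℂ) : X → ℂ) x = Ψ x n * ((f : LocallyConstant X ℂ) : X → ℂ) x)
    (hne : ∀ x : X, ∃ n : N, Ψ x n ≠ ψ n) :
    Submodule.span ℂ {g : SchwartzTD X | ∃ (n : N) (f : SchwartzTD X), g = ρ n f - ψ n • f}
      = ⊤ := by
  classical
  set W := Submodule.span ℂ
      {g : SchwartzTD X | ∃ (n : N) (f : SchwartzTD X), g = ρ n f - ψ n • f} with hW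
  -- Step A: multiplying a generator by a locally constant function stays in W
  have hA : ∀ (n : N) (f₀ : SchwartzTD X) (q : LocallyConstant X ℂ),
      mulS q (ρ n f₀ - ψ n • f₀) ∈ W := by
    intro n f₀ q
    have : mulS q (ρ n f₀ - ψ n • f₀) = ρ n (mulS q f₀) - ψ n • mulS q f₀ := by
      apply Subtype.ext
      apply LocallyConstant.ext
      intro y
      have h2 : ((ρ n (mulS q f₀) : SchwartzTD X) : LocallyConstant X ℂ) y
          = Ψ y n * (q y * (f₀ : LocallyConstant X ℂ) y) := by
        rw [hρ n (mulS q f₀) y, mulS_apply]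
      calc ((mulS q (ρ n f₀ - ψ n • f₀) : SchwartzTD X) : LocallyConstant X ℂ) y
          = q y * (Ψ y n * (f₀ : LocallyConstant X ℂ) y - ψ n * (f₀ : LocallyConstant X ℂ) y) := by
            rw [mulS_apply, sub_smul_applyS, hρ n f₀ y]
        _ = Ψ y n * (q y * (f₀ : LocallyConstant X ℂ) y)
              - ψ n * (q y * (f₀ : LocallyConstant X ℂ) y) := by ring
        _ = ((ρ n (mulS q f₀) - ψ n • mulS q f₀ : SchwartzTD X) : LocallyConstant X ℂ) y := by
            rw [sub_smul_applyS, h2, mulS_apply]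
    rw [this]
    exact Submodule.subset_span ⟨n, mulS q f₀, rfl⟩
  -- Step B: clopen neighborhoods on which everything supported there lies in W
  have hpt : ∀ x : X, ∃ V : Set X, IsClopen V ∧ x ∈ V ∧
      ∀ g : SchwartzTD X, (∀ y, y ∉ V → (g : LocallyConstant X ℂ) y = 0) → g ∈ W := by
    intro x
    obtain ⟨n, hn⟩ := hne x
    obtain ⟨s, hs, hxs⟩ := exists_compact_mem_nhds x
    obtain ⟨C, hC, hxC, hCs⟩ :=
      (loc_compact_Haus_tot_disc_of_zero_dim (H := X)).mem_nhds_iff.1 hxs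
    have hCcomp : IsCompact C := hs.of_isClosed_subset hC.isClosed hCs
    set fC : SchwartzTD X := ⟨(1 : LocallyConstant X ℂ).indicator hC, by
      show HasCompactSupport _
      apply HasCompactSupport.intro hCcomp
      intro y hy
      exact LocallyConstant.indicator_of_notMem _ hC hy⟩ with hfC
    set gen : SchwartzTD X := ρ n fC - ψ n • fC with hgen
    have hval : ∀ y ∈ C, ((gen : SchwartzTD X) : LocallyConstant X ℂ) y = Ψ y n - ψ n := by
      intro y hy
      have hind : (fC : LocallyConstant X ℂ) y = 1 := by
        show ((1 : LocallyConstant X ℂ).indicator hC) y = 1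
        rw [LocallyConstant.indicator_of_mem _ hC hy]
        rfl
      rw [hgen, sub_smul_applyS, hρ n fC y, hind]
      ring
    set c : ℂ := Ψ x n - ψ n with hc
    have hc0 : c ≠ 0 := sub_ne_zero.2 hn
    set V : Set X := C ∩ {y | ((gen : SchwartzTD X) : LocallyConstant X ℂ) y = c} with hV
    have hVclopen : IsClopen V :=
      hC.inter ((gen : LocallyConstant X ℂ).isLocallyConstant.isClopen_fiber c)
    refine ⟨V, hVclopen, ⟨hxC, hval x hxC⟩, ?_⟩
    intro g hg
    have : g = mulS (c⁻¹ • (g : LocallyConstant X ℂ)) gen := by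
      apply Subtype.ext
      apply LocallyConstant.ext
      intro y
      by_cases hy : y ∈ V
      · have h1 : ((gen : SchwartzTD X) : LocallyConstant X ℂ) y = c := hy.2
        rw [mulS_apply]
        show (g : LocallyConstant X ℂ) y
          = c⁻¹ * (g : LocallyConstant X ℂ) y * ((gen : SchwartzTD X) : LocallyConstant X ℂ) y
        rw [h1]
        field_simp
      · have h0 : (g : LocallyConstant X ℂ) y = 0 := hg y hy
        rw [mulS_apply]
        show (g : LocallyConstant X ℂ) y
          = c⁻¹ * (g : LocallyConstant X ℂ) y * ((gen : SchwartzTD X) : LocallyConstant X ℂ) y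
        rw [h0]
        ring
    rw [this]
    exact hA n fC _
  choose V hVclopen hVmem hVprop using hpt
  -- Step C: induction on finite covers
  have key : ∀ t : Finset X, ∀ g : SchwartzTD X,
      tsupport ((g : LocallyConstant X ℂ) : X → ℂ) ⊆ (⋃ x ∈ t, V x) → g ∈ W := by
    intro t
    induction t using Finset.induction_on with
    | empty =>
      intro g hg
      have : g = 0 := by
        apply Subtype.ext
        apply LocallyConstant.ext
        intro y
        by_contra h
        have : y ∈ tsupport ((g : LocallyConstant X ℂ) : X → ℂ) :=
          subset_closure (by simpa using h)
        simpa using hg this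
      rw [this]; exact W.zero_mem
    | @insert a t ha ih =>
      intro g hg
      set g₁ : SchwartzTD X := mulS ((1 : LocallyConstant X ℂ).indicator (hVclopen a)) g with hg₁
      have hmem1 : g₁ ∈ W := by
        apply hVprop a
        intro y hy
        rw [hg₁, mulS_apply, LocallyConstant.indicator_of_notMem _ (hVclopen a) hy]
        simp
      have hsub : tsupport (((g - g₁ : SchwartzTD X) : LocallyConstant X ℂ) : X → ℂ)
          ⊆ ⋃ x ∈ t, V x := by
        have hclosed : IsClosed (⋃ x ∈ t, V x) :=
          t.finite_toSet.isClosed_biUnion fun i _ => (hVclopen i).isClosed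
        apply closure_minimal _ hclosed
        intro y hy
        have hy' : (((g - g₁ : SchwartzTD X) : LocallyConstant X ℂ) : X → ℂ) y ≠ 0 := hy
        have hval : (((g - g₁ : SchwartzTD X) : LocallyConstant X ℂ) : X → ℂ) y
            = (g : LocallyConstant X ℂ) y
              - ((1 : LocallyConstant X ℂ).indicator (hVclopen a)) y
                  * (g : LocallyConstant X ℂ) y := by
          rw [sub_applyS, hg₁, mulS_apply]
        by_cases hyV : y ∈ V a
        · exfalso
          apply hy'
          rw [hval, LocallyConstant.indicator_of_mem _ (hVclopen a) hyV]
          simp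
        · have hgy : (g : LocallyConstant X ℂ) y ≠ 0 := by
            intro h0
            apply hy'
            rw [hval, h0]
            ring
          have hmem : y ∈ tsupport ((g : LocallyConstant X ℂ) : X → ℂ) :=
            subset_closure (by simpa using hgy)
          have := hg hmem
          simp only [Finset.mem_insert, Set.mem_iUnion] at this ⊢
          obtain ⟨i, hi, hyi⟩ := this
          rcases hi with rfl | hi
          · exact absurd hyi hyV
          · exact ⟨i, hi, hyi⟩
      have hmem2 : g - g₁ ∈ W := ih (g - g₁) hsub
      have := W.add_mem hmem1 hmem2
      simpa using this
  -- Step D: conclude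
  rw [eq_top_iff]
  intro f _
  have hfc : HasCompactSupport ((f : LocallyConstant X ℂ) : X → ℂ) := f.2
  obtain ⟨t, ht⟩ := hfc.elim_finite_subcover V (fun x => (hVclopen x).isOpen)
    (fun y hy => Set.mem_iUnion.2 ⟨y, hVmem y⟩)
  exact key t f ht
end
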